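/- Let A be an abelian category and n ≥ 1. The functor W_n(A) → Fun([n-1], A) sending a functor F to the chain F(0,1) → F(0,2) → ⋯ → F(0,n) (indexed by the linear order [n-1] = {0 < ⋯ < n-1}) is fully faithful, and its essential image consists exactly of those functors [n-1] → A all of whose arrows are monomorphisms. -/

import Mathlib

open CategoryTheory CategoryTheory.Limits

/-- The poset `Ar[n]` of pairs `(i,j)` with `0 ≤ i ≤ j ≤ n`, ordered componentwise. -/
abbrev ArPos (n : ℕ) := {p : Fin (n+1) × Fin (n+1) // p.1 ≤ p.2}

/-- The morphism of `Ar[n]` from `(i,j)` to `(i',j')` when `i ≤ i'` and `j ≤ j'`. -/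
def arLe {n : ℕ} {i j i' j' : Fin (n+1)} (hij : i ≤ j) (hi'j' : i' ≤ j')
    (h1 : i ≤ i') (h2 : j ≤ j') :
    (⟨(i, j), hij⟩ : ArPos n) ⟶ ⟨(i', j'), hi'j'⟩ :=
  homOfLE (Subtype.mk_le_mk.mpr (Prod.mk_le_mk.mpr ⟨h1, h2⟩))

/-- The condition defining `W_n(A)` inside `Fun(Ar[n], A)`: each `F(i,i)` is a zero
object, and for every pair `(i,j) ≤ (i',j')` in `Ar[n]` (with all four corners in
`Ar[n]`) the square with vertices `F(i,j), F(i,j'), F(i',j), F(i',j')` is both a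
pullback and a pushout. -/
def WCond {A : Type*} [Category A] (n : ℕ) (F : ArPos n ⥤ A) : Prop :=
  (∀ i : Fin (n+1), IsZero (F.obj ⟨(i, i), le_rfl⟩)) ∧
  (∀ (i i' j j' : Fin (n+1)) (h1 : i ≤ i') (h2 : i' ≤ j) (h3 : j ≤ j'),
    IsPullback
        (F.map (arLe (h1.trans h2) ((h1.trans h2).trans h3) le_rfl h3))
        (F.map (arLe (h1.trans h2) h2 h1 le_rfl))
        (F.map (arLe ((h1.trans h2).trans h3) (h2.trans h3) h1 le_rfl))
        (F.map (arLe h2 (h2.trans h3) le_rfl h3)) ∧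
    IsPushout
        (F.map (arLe (h1.trans h2) ((h1.trans h2).trans h3) le_rfl h3))
        (F.map (arLe (h1.trans h2) h2 h1 le_rfl))
        (F.map (arLe ((h1.trans h2).trans h3) (h2.trans h3) h1 le_rfl))
        (F.map (arLe h2 (h2.trans h3) le_rfl h3)))

/-- The category `W_n(A)` of diagrams arising in level `n` of Waldhausen's
`S`-construction of `A`. -/
abbrev W (A : Type*) [Category A] (n : ℕ) := ObjectProperty.FullSubcategory (WCond (A := A) n)

/-- The monotone inclusion `[n-1] → Ar[n]`, `t ↦ (0, t+1)`. -/
def topMono (n : ℕ) : Fin n →o ArPos n where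
  toFun t := ⟨((0 : Fin (n+1)), ⟨t.val + 1, by omega⟩), Fin.zero_le _⟩
  monotone' s t h :=
    Subtype.mk_le_mk.mpr (Prod.mk_le_mk.mpr ⟨le_rfl, Fin.mk_le_mk.mpr (by
      exact Nat.succ_le_succ h)⟩)

/-- The functor `W_n(A) → Fun([n-1], A)` sending `F` to the chain
`F(0,1) → F(0,2) → ⋯ → F(0,n)`. -/
def topRow (A : Type*) [Category A] (n : ℕ) : W A n ⥤ (Fin n ⥤ A) :=
  ObjectProperty.ι _ ⋙
    (Functor.whiskeringLeft (Fin n) (ArPos n) A).obj (topMono n).monotone.functor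


section GeneralHelpers

variable {C : Type*} [Category C]

lemma epi_inl_of_isPushout' {Z X Y P : C} {f : Z ⟶ X} {g : Z ⟶ Y} {inl : X ⟶ P} {inr : Y ⟶ P}
    (H : IsPushout f g inl inr) (hg : Epi g) : Epi inl := by
  constructor
  intro W a b hab
  have h2 : inr ≫ a = inr ≫ b := by
    have : g ≫ inr ≫ a = g ≫ inr ≫ b := by
      rw [← Category.assoc, ← H.w, Category.assoc, hab, ← Category.assoc, H.w, Category.assoc]
    exact (cancel_epi g).1 this
  exact H.hom_ext hab h2

lemma mono_fst_of_isPullback' {Z X Y P : C} {fst : P ⟶ X} {snd : P ⟶ Y} {f : X ⟶ Z} {g : Y ⟶ Z}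
    (H : IsPullback fst snd f g) (hg : Mono g) : Mono fst := by
  constructor
  intro W a b hab
  have h2 : a ≫ snd = b ≫ snd := by
    have : (a ≫ snd) ≫ g = (b ≫ snd) ≫ g := by
      rw [Category.assoc, ← H.w, Category.assoc, ← H.w, ← Category.assoc, hab, Category.assoc]
    exact (cancel_mono g).1 this
  exact H.hom_ext hab h2

variable [Abelian C]

lemma isPullback_of_isPushout_of_mono' {Z X Y P : C} {f : Z ⟶ X} {g : Z ⟶ Y}
    {inl : X ⟶ P} {inr : Y ⟶ P} (H : IsPushout f g inl inr) (hf : Mono f) :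
    IsPullback f g inl inr := by
  have w0 : biprod.lift f (-g) ≫ biprod.desc inl inr = 0 := by
    simp [H.w]
  have hcolim : IsColimit (CokernelCofork.ofπ (biprod.desc inl inr) w0) := by
    refine CokernelCofork.IsColimit.ofπ _ _
      (fun {W} k hk => H.desc (biprod.inl ≫ k) (biprod.inr ≫ k) ?_)
      (fun {W} k hk => ?_) (fun {W} k hk m hm => ?_)
    · have hk' : f ≫ biprod.inl ≫ k - g ≫ biprod.inr ≫ k = 0 := by
        have h2 := hk
        rw [biprod.lift_eq] at h2
        simpa [Preadditive.add_comp, Preadditive.neg_comp, sub_eq_add_neg] using h2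
      rw [← sub_eq_zero]
      simpa using hk'
    · apply biprod.hom_ext' <;>
        simp [H.inl_desc, H.inr_desc]
    · apply H.hom_ext
      · have h2 : inl ≫ m = biprod.inl ≫ k := by
          rw [show inl = biprod.inl ≫ biprod.desc inl inr by simp, Category.assoc, hm]
        rw [h2, H.inl_desc]
      · have h2 : inr ≫ m = biprod.inr ≫ k := by
          rw [show inr = biprod.inr ≫ biprod.desc inl inr by simp, Category.assoc, hm]
        rw [h2, H.inr_desc]
  haveI : Mono (biprod.lift f (-g)) := by
    have h2 : biprod.lift f (-g) ≫ biprod.fst = f := by simp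
    exact mono_of_mono_fac h2
  have hker := Abelian.monoIsKernelOfCokernel _ hcolim
  have hL : ∀ s : PullbackCone inl inr,
      { l : s.pt ⟶ Z // l ≫ biprod.lift f (-g) = biprod.lift s.fst (-s.snd) } := by
    intro s
    exact KernelFork.IsLimit.lift' hker (biprod.lift s.fst (-s.snd)) (by simp [s.condition])
  refine IsPullback.of_isLimit' H.toCommSq
    (PullbackCone.IsLimit.mk H.toCommSq.w (fun s => (hL s).1)
      (fun s => ?_) (fun s => ?_) (fun s m hm1 hm2 => ?_))
  · have h2 := congrArg (fun t => t ≫ biprod.fst) (hL s).2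
    simpa using h2
  · have h2 := congrArg (fun t => t ≫ biprod.snd) (hL s).2
    simp only [Category.assoc, biprod.lift_snd] at h2
    have h3 : (hL s).1 ≫ (-g) = -(s.snd) := by simpa using h2
    simpa using h3
  · show m = (hL s).1
    refine Fork.IsLimit.hom_ext hker ?_
    show m ≫ biprod.lift f (-g) = (hL s).1 ≫ biprod.lift f (-g)
    rw [(hL s).2]
    apply biprod.hom_ext <;> simp [hm1, hm2]

end GeneralHelpers

open CategoryTheory CategoryTheory.Limits

section Pseudo

open CategoryTheory.Abelian

attribute [local instance] Pseudoelement.objectToSort Pseudoelement.homToFun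

variable {C : Type*} [Category C] [Abelian C]

lemma isZero_cokernel_of_epi' {X Y : C} (f : X ⟶ Y) (hf : Epi f) : IsZero (cokernel f) := by
  rw [IsZero.iff_id_eq_zero]
  have h := cokernel.π_of_epi f
  exact (cancel_epi (cokernel.π f)).1 (by simp [h])

lemma mono_cokernel_map' {X Y Y' : C} (f : X ⟶ Y) (f' : X ⟶ Y') (v : Y ⟶ Y') (hv : Mono v)
    (w : f ≫ v = 𝟙 X ≫ f') :
    Mono (cokernel.map f f' (𝟙 X) v w) := by
  apply Pseudoelement.mono_of_zero_of_map_zero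
  intro a ha
  obtain ⟨b, hb⟩ := Pseudoelement.pseudo_surjective_of_epi (cokernel.π f) a
  have hπ : cokernel.π f ≫ cokernel.map f f' (𝟙 X) v w = v ≫ cokernel.π f' := by
    simp
  have h1 : (cokernel.π f') ((v : Y ⟶ Y') b) = 0 := by
    rw [← Pseudoelement.comp_apply, ← hπ, Pseudoelement.comp_apply, hb, ha]
  have hexact : (ShortComplex.mk f' (cokernel.π f') (cokernel.condition f')).Exact :=
    ShortComplex.exact_of_g_is_cokernel _ (cokernelIsCokernel f')
  obtain ⟨c, hc⟩ := Pseudoelement.pseudo_exact_of_exact hexact _ h1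
  have h2 : (v : Y ⟶ Y') ((f : X ⟶ Y) c) = (v : Y ⟶ Y') b := by
    rw [← Pseudoelement.comp_apply, w]
    simpa using hc
  have h3 : (f : X ⟶ Y) c = b := Pseudoelement.pseudo_injective_of_mono v h2
  rw [← hb, ← h3, ← Pseudoelement.comp_apply, cokernel.condition, Pseudoelement.zero_apply]

end Pseudo
section WMach

variable {A : Type*} [Category A] {n : ℕ}

lemma fmap_comp (F : ArPos n ⥤ A) {p q r : ArPos n} (f : p ⟶ q) (g : q ⟶ r) (h : p ⟶ r) :
    F.map f ≫ F.map g = F.map h := by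
  rw [← F.map_comp]
  exact congrArg F.map (Subsingleton.elim _ _)

lemma fmap_self (F : ArPos n ⥤ A) {p : ArPos n} (f : p ⟶ p) : F.map f = 𝟙 _ := by
  rw [show f = 𝟙 p from Subsingleton.elim _ _, F.map_id]

variable {F : ArPos n ⥤ A}

/-- The canonical map `F(0,j) ⟶ F(i,j)`. -/
abbrev eMap (F : ArPos n ⥤ A) (i j : Fin (n+1)) (hij : i ≤ j) :
    F.obj ⟨((0 : Fin (n+1)), j), Fin.zero_le j⟩ ⟶ F.obj ⟨(i, j), hij⟩ :=
  F.map (arLe (Fin.zero_le j) hij (Fin.zero_le i) le_rfl)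

lemma epi_eMap (hF : WCond n F) (i j : Fin (n+1)) (hij : i ≤ j) : Epi (eMap F i j hij) := by
  have po := (hF.2 0 i i j (Fin.zero_le i) le_rfl hij).2
  have hg : Epi (F.map (arLe (Fin.zero_le i) le_rfl (Fin.zero_le i) le_rfl)) :=
    ⟨fun u v _ => (hF.1 i).eq_of_src u v⟩
  exact epi_inl_of_isPushout' po hg

lemma comp_eMap_zero [Limits.HasZeroMorphisms A] (hF : WCond n F) (i j : Fin (n+1)) (hij : i ≤ j) :
    F.map (arLe (Fin.zero_le i) (Fin.zero_le j) le_rfl hij) ≫ eMap F i j hij = 0 := by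
  rw [fmap_comp F _ _ (arLe (Fin.zero_le i) hij (Fin.zero_le i) hij),
    ← fmap_comp F (arLe (Fin.zero_le i) le_rfl (Fin.zero_le i) le_rfl)
      (arLe le_rfl hij le_rfl hij) (arLe (Fin.zero_le i) hij (Fin.zero_le i) hij),
    (hF.1 i).eq_of_tgt (F.map (arLe (Fin.zero_le i) le_rfl (Fin.zero_le i) le_rfl)) 0,
    zero_comp]

end WMach
section Constr

open ZeroObject

variable {A : Type*} [Category A] [Abelian A] {n : ℕ}

/-- Extension of a chain `D : Fin n ⥤ A` to `Fin (n+1)` by a zero object at the bottom. -/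
noncomputable def Ob (D : Fin n ⥤ A) (j : Fin (n+1)) : A :=
  Fin.cases 0 (fun t => D.obj t) j

/-- The maps of the extended chain. -/
noncomputable def mp (D : Fin n ⥤ A) (i j : Fin (n+1)) (hij : i ≤ j) : Ob D i ⟶ Ob D j :=
  Fin.cases (motive := fun i => ∀ j : Fin (n+1), i ≤ j → (Ob D i ⟶ Ob D j))
    (fun _ _ => 0)
    (fun s => Fin.cases (motive := fun j => s.succ ≤ j → (Ob D s.succ ⟶ Ob D j))
      (fun h => absurd h (by simp [Fin.le_def]))
      (fun t h => D.map (homOfLE (by exact Fin.succ_le_succ_iff.mp h)))) i j hij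

lemma mp_zero (D : Fin n ⥤ A) (j : Fin (n+1)) (h : (0 : Fin (n+1)) ≤ j) :
    mp D 0 j h = 0 := rfl

lemma mp_succ (D : Fin n ⥤ A) (s t : Fin n) (h : s.succ ≤ t.succ) :
    mp D s.succ t.succ h = D.map (homOfLE (Fin.succ_le_succ_iff.mp h)) := rfl

lemma isZero_Ob_zero (D : Fin n ⥤ A) : IsZero (Ob D 0) := isZero_zero A

lemma mp_refl (D : Fin n ⥤ A) (i : Fin (n+1)) (h : i ≤ i) : mp D i i h = 𝟙 (Ob D i) := by
  induction i using Fin.cases with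
  | zero => exact ((isZero_Ob_zero D).eq_of_src _ _)
  | succ s =>
    rw [mp_succ]
    rw [show homOfLE (Fin.succ_le_succ_iff.mp h) = 𝟙 s from Subsingleton.elim _ _, D.map_id]
    rfl

lemma mp_comp (D : Fin n ⥤ A) (i j k : Fin (n+1)) (hij : i ≤ j) (hjk : j ≤ k) :
    mp D i j hij ≫ mp D j k hjk = mp D i k (hij.trans hjk) := by
  induction i using Fin.cases with
  | zero => rw [mp_zero, mp_zero, zero_comp]
  | succ s =>
    induction j using Fin.cases with
    | zero => exact absurd hij (by simp [Fin.le_def])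
    | succ t =>
      induction k using Fin.cases with
      | zero => exact absurd hjk (by simp [Fin.le_def])
      | succ u =>
        rw [mp_succ, mp_succ, mp_succ]; refine (D.map_comp _ _).symm.trans ?_
        exact congrArg D.map (Subsingleton.elim _ _)

lemma mono_mp (D : Fin n ⥤ A) (hD : ∀ (s t : Fin n) (f : s ⟶ t), Mono (D.map f))
    (i j : Fin (n+1)) (hij : i ≤ j) : Mono (mp D i j hij) := by
  induction i using Fin.cases with
  | zero => exact ⟨fun u v _ => (isZero_Ob_zero D).eq_of_tgt u v⟩
  | succ s =>
    induction j using Fin.cases with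
    | zero => exact absurd hij (by simp [Fin.le_def])
    | succ t => rw [mp_succ]; exact hD _ _ _

lemma arpos_le1 {p q : ArPos n} (m : p ⟶ q) : p.1.1 ≤ q.1.1 :=
  (Prod.le_def.mp (Subtype.coe_le_coe.mpr (leOfHom m))).1

lemma arpos_le2 {p q : ArPos n} (m : p ⟶ q) : p.1.2 ≤ q.1.2 :=
  (Prod.le_def.mp (Subtype.coe_le_coe.mpr (leOfHom m))).2

/-- The Waldhausen diagram associated to a chain of monomorphisms: `(i,j) ↦ D(j)/D(i)`. -/
noncomputable abbrev FW (D : Fin n ⥤ A) : ArPos n ⥤ A where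
  obj p := cokernel (mp D p.1.1 p.1.2 p.2)
  map {p q} m := cokernel.map _ _ (mp D p.1.1 q.1.1 (arpos_le1 m)) (mp D p.1.2 q.1.2 (arpos_le2 m))
    (by rw [mp_comp, mp_comp])
  map_id p := by
    apply (cancel_epi (cokernel.π _)).1
    simp [mp_refl]
  map_comp {p q r} m m' := by
    apply (cancel_epi (cokernel.π _)).1
    simp only [cokernel.π_desc, Category.assoc, cokernel.π_desc_assoc]
    rw [← Category.assoc, mp_comp]

lemma pi_FW (D : Fin n ⥤ A) {p q : ArPos n} (m : p ⟶ q) :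
    cokernel.π (mp D p.1.1 p.1.2 p.2) ≫ (FW D).map m
      = mp D p.1.2 q.1.2 (arpos_le2 m) ≫ cokernel.π (mp D q.1.1 q.1.2 q.2) := by
  simp [FW]

end Constr

section WcondFW

open ZeroObject

variable {A : Type*} [Category A] [Abelian A] {n : ℕ}

lemma wcond_FW (D : Fin n ⥤ A) (hD : ∀ (s t : Fin n) (f : s ⟶ t), Mono (D.map f)) :
    WCond n (FW D) := by
  have hzero : ∀ i : Fin (n+1), IsZero ((FW D).obj ⟨(i, i), le_rfl⟩) := by
    intro i
    have h : IsZero (cokernel (𝟙 (Ob D i))) := isZero_cokernel_of_epi' _ inferInstance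
    show IsZero (cokernel (mp D i i le_rfl))
    rw [mp_refl]
    exact h
  refine ⟨hzero, fun i i' j j' h1 h2 h3 => ?_⟩
  have hij : i ≤ j := h1.trans h2
  have hij' : i ≤ j' := hij.trans h3
  have hi'j' : i' ≤ j' := h2.trans h3
  have hπtop : cokernel.π (mp D i j hij) ≫ (FW D).map (arLe hij hij' le_rfl h3)
      = mp D j j' h3 ≫ cokernel.π (mp D i j' hij') :=
    pi_FW (p := ⟨(i,j),hij⟩) (q := ⟨(i,j'),hij'⟩) D (arLe hij hij' le_rfl h3)
  have hπleft : cokernel.π (mp D i j hij) ≫ (FW D).map (arLe hij h2 h1 le_rfl)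
      = cokernel.π (mp D i' j h2) := by
    rw [pi_FW (p := ⟨(i,j),hij⟩) (q := ⟨(i',j),h2⟩) D (arLe hij h2 h1 le_rfl), mp_refl,
      Category.id_comp]
  have hπinl : cokernel.π (mp D i j' hij') ≫ (FW D).map (arLe hij' hi'j' h1 le_rfl)
      = cokernel.π (mp D i' j' hi'j') := by
    rw [pi_FW (p := ⟨(i,j'),hij'⟩) (q := ⟨(i',j'),hi'j'⟩) D (arLe hij' hi'j' h1 le_rfl), mp_refl,
      Category.id_comp]
  have hπinr : cokernel.π (mp D i' j h2) ≫ (FW D).map (arLe h2 hi'j' le_rfl h3)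
      = mp D j j' h3 ≫ cokernel.π (mp D i' j' hi'j') :=
    pi_FW (p := ⟨(i',j),h2⟩) (q := ⟨(i',j'),hi'j'⟩) D (arLe h2 hi'j' le_rfl h3)
  have hcomm : CommSq ((FW D).map (arLe hij hij' le_rfl h3)) ((FW D).map (arLe hij h2 h1 le_rfl))
      ((FW D).map (arLe hij' hi'j' h1 le_rfl)) ((FW D).map (arLe h2 hi'j' le_rfl h3)) :=
    ⟨by rw [fmap_comp _ _ _ (arLe hij hi'j' h1 h3), fmap_comp _ _ _ (arLe hij hi'j' h1 h3)]⟩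
  have hpo : IsPushout ((FW D).map (arLe hij hij' le_rfl h3)) ((FW D).map (arLe hij h2 h1 le_rfl))
      ((FW D).map (arLe hij' hi'j' h1 le_rfl)) ((FW D).map (arLe h2 hi'j' le_rfl h3)) := by
    have hdesc : ∀ (s : PushoutCocone ((FW D).map (arLe hij hij' le_rfl h3))
        ((FW D).map (arLe hij h2 h1 le_rfl))),
        mp D i' j' hi'j' ≫ (cokernel.π (mp D i j' hij') ≫ s.inl) = 0 := by
      intro s
      calc mp D i' j' hi'j' ≫ (cokernel.π (mp D i j' hij') ≫ s.inl)
          = mp D i' j h2 ≫ (mp D j j' h3 ≫ cokernel.π (mp D i j' hij')) ≫ s.inl := by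
            rw [← mp_comp D i' j j' h2 h3]
            simp only [Category.assoc]
        _ = mp D i' j h2 ≫ (cokernel.π (mp D i j hij)
              ≫ (FW D).map (arLe hij hij' le_rfl h3)) ≫ s.inl := by rw [hπtop]
        _ = mp D i' j h2 ≫ cokernel.π (mp D i j hij)
              ≫ ((FW D).map (arLe hij h2 h1 le_rfl) ≫ s.inr) := by
            simp only [Category.assoc]
            rw [s.condition]
        _ = mp D i' j h2 ≫ cokernel.π (mp D i' j h2) ≫ s.inr := by
            rw [← Category.assoc (cokernel.π (mp D i j hij)), hπleft]
        _ = 0 := by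
            rw [← Category.assoc, cokernel.condition, zero_comp]
    refine IsPushout.of_isColimit' hcomm (PushoutCocone.IsColimit.mk hcomm.w
      (fun s => cokernel.desc _ (cokernel.π (mp D i j' hij') ≫ s.inl) (hdesc s))
      (fun s => ?_) (fun s => ?_) (fun s m hm1 hm2 => ?_))
    · apply (cancel_epi (cokernel.π (mp D i j' hij'))).1
      rw [← Category.assoc, hπinl, cokernel.π_desc]
    · apply (cancel_epi (cokernel.π (mp D i' j h2))).1
      calc cokernel.π (mp D i' j h2) ≫ (FW D).map (arLe h2 hi'j' le_rfl h3)
            ≫ cokernel.desc _ (cokernel.π (mp D i j' hij') ≫ s.inl) (hdesc s)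
          = (mp D j j' h3 ≫ cokernel.π (mp D i' j' hi'j'))
              ≫ cokernel.desc _ (cokernel.π (mp D i j' hij') ≫ s.inl) (hdesc s) := by
            rw [← Category.assoc, hπinr]
        _ = mp D j j' h3 ≫ cokernel.π (mp D i j' hij') ≫ s.inl := by
            rw [Category.assoc, cokernel.π_desc]
        _ = (cokernel.π (mp D i j hij) ≫ (FW D).map (arLe hij hij' le_rfl h3)) ≫ s.inl := by
            rw [hπtop, Category.assoc]
        _ = cokernel.π (mp D i j hij) ≫ (FW D).map (arLe hij h2 h1 le_rfl) ≫ s.inr := by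
            rw [Category.assoc, s.condition]
        _ = cokernel.π (mp D i' j h2) ≫ s.inr := by
            rw [← Category.assoc, hπleft]
    · apply (cancel_epi (cokernel.π (mp D i' j' hi'j'))).1
      calc cokernel.π (mp D i' j' hi'j') ≫ m
          = (cokernel.π (mp D i j' hij') ≫ (FW D).map (arLe hij' hi'j' h1 le_rfl)) ≫ m := by
            rw [hπinl]
        _ = cokernel.π (mp D i j' hij') ≫ s.inl := by rw [Category.assoc, hm1]
        _ = cokernel.π (mp D i' j' hi'j')
              ≫ cokernel.desc _ (cokernel.π (mp D i j' hij') ≫ s.inl) (hdesc s) := by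
            rw [cokernel.π_desc]
  have hmono : Mono ((FW D).map (arLe hij hij' le_rfl h3)) := by
    have he : (FW D).map (arLe hij hij' le_rfl h3)
        = cokernel.map (mp D i j hij) (mp D i j' hij') (𝟙 _) (mp D j j' h3)
          (by rw [mp_comp, Category.id_comp]) := by
      apply (cancel_epi (cokernel.π (mp D i j hij))).1
      simp [hπtop]
    rw [he]
    exact mono_cokernel_map' _ _ _ (mono_mp D hD j j' h3) _
  exact ⟨isPullback_of_isPushout_of_mono' hpo hmono, hpo⟩

end WcondFW

section Main

open ZeroObject

lemma isIso_pi_zero {A : Type*} [Category A] [Abelian A] {n : ℕ} (D : Fin n ⥤ A)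
    (j : Fin (n+1)) (h : (0 : Fin (n+1)) ≤ j) :
    IsIso (cokernel.π (mp D 0 j h)) := by
  rw [mp_zero]
  infer_instance

/-- For an abelian category `A` and `n ≥ 1`, the functor
`W_n(A) → Fun([n-1], A)`, `F ↦ (F(0,1) → ⋯ → F(0,n))`, is fully faithful with essential
image the functors `[n-1] → A` all of whose arrows are monomorphisms. -/
theorem statement9 (A : Type*) [Category A] [Abelian A] (n : ℕ) (hn : 1 ≤ n) :
    (topRow A n).Full ∧ (topRow A n).Faithful ∧
    (∀ D : Fin n ⥤ A,
      (topRow A n).essImage D ↔ ∀ (s t : Fin n) (f : s ⟶ t), Mono (D.map f)) := by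
  have hfull : (topRow A n).Full := by
    constructor
    intro FF GG α
    let α' : ∀ j : Fin (n+1),
        FF.obj.obj ⟨((0 : Fin (n+1)), j), Fin.zero_le j⟩ ⟶
          GG.obj.obj ⟨((0 : Fin (n+1)), j), Fin.zero_le j⟩ :=
      fun j => Fin.cases 0 (fun t => α.app t) j
    have hα' : ∀ (j j' : Fin (n+1)) (h : j ≤ j'),
        FF.obj.map (arLe (Fin.zero_le j) (Fin.zero_le j') le_rfl h) ≫ α' j'
          = α' j ≫ GG.obj.map (arLe (Fin.zero_le j) (Fin.zero_le j') le_rfl h) := by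
      intro j j' h
      induction j using Fin.cases with
      | zero => exact (FF.2.1 0).eq_of_src _ _
      | succ s =>
        induction j' using Fin.cases with
        | zero =>
          exfalso
          have h2 := h
          simp [Fin.le_def] at h2
        | succ t =>
          have hst : s ≤ t := Fin.succ_le_succ_iff.mp h
          have hnat := α.naturality (homOfLE hst)
          have e1 : FF.obj.map (arLe (Fin.zero_le s.succ) (Fin.zero_le t.succ) le_rfl h)
              = FF.obj.map ((topMono n).monotone.functor.map (homOfLE hst)) :=
            congrArg FF.obj.map (Subsingleton.elim _ _)
          have e2 : GG.obj.map (arLe (Fin.zero_le s.succ) (Fin.zero_le t.succ) le_rfl h)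
              = GG.obj.map ((topMono n).monotone.functor.map (homOfLE hst)) :=
            congrArg GG.obj.map (Subsingleton.elim _ _)
          rw [e1, e2]
          exact hnat
    have hβ : ∀ p : ArPos n,
        {b : FF.obj.obj p ⟶ GG.obj.obj p //
          eMap FF.obj p.1.1 p.1.2 p.2 ≫ b = α' p.1.2 ≫ eMap GG.obj p.1.1 p.1.2 p.2} := by
      intro p
      obtain ⟨⟨i, j⟩, hij⟩ := p
      have po := (FF.2.2 0 i i j (Fin.zero_le i) le_rfl hij).2
      refine ⟨po.desc (α' j ≫ eMap GG.obj i j hij) 0 ?_, ?_⟩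
      · rw [comp_zero, ← Category.assoc, hα' i j hij, Category.assoc,
          comp_eMap_zero GG.2 i j hij, comp_zero]
      · exact po.inl_desc _ _ _
    refine ⟨{ hom := { app := fun p => (hβ p).1, naturality := ?_ } }, ?_⟩
    · intro p q m
      haveI := epi_eMap FF.2 p.1.1 p.1.2 p.2
      apply (cancel_epi (eMap FF.obj p.1.1 p.1.2 p.2)).1
      have hl : eMap FF.obj p.1.1 p.1.2 p.2 ≫ FF.obj.map m
          = FF.obj.map (arLe (Fin.zero_le p.1.2) (Fin.zero_le q.1.2) le_rfl (arpos_le2 m))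
              ≫ eMap FF.obj q.1.1 q.1.2 q.2 := by
        rw [fmap_comp FF.obj _ _ (arLe (Fin.zero_le p.1.2) q.2 (Fin.zero_le q.1.1) (arpos_le2 m)),
          fmap_comp FF.obj _ _ (arLe (Fin.zero_le p.1.2) q.2 (Fin.zero_le q.1.1) (arpos_le2 m))]
      have hr : eMap GG.obj p.1.1 p.1.2 p.2 ≫ GG.obj.map m
          = GG.obj.map (arLe (Fin.zero_le p.1.2) (Fin.zero_le q.1.2) le_rfl (arpos_le2 m))
              ≫ eMap GG.obj q.1.1 q.1.2 q.2 := by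
        rw [fmap_comp GG.obj _ _ (arLe (Fin.zero_le p.1.2) q.2 (Fin.zero_le q.1.1) (arpos_le2 m)),
          fmap_comp GG.obj _ _ (arLe (Fin.zero_le p.1.2) q.2 (Fin.zero_le q.1.1) (arpos_le2 m))]
      calc eMap FF.obj p.1.1 p.1.2 p.2 ≫ FF.obj.map m ≫ (hβ q).1
          = (eMap FF.obj p.1.1 p.1.2 p.2 ≫ FF.obj.map m) ≫ (hβ q).1 := by
            rw [Category.assoc]
        _ = FF.obj.map (arLe (Fin.zero_le p.1.2) (Fin.zero_le q.1.2) le_rfl (arpos_le2 m))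
              ≫ eMap FF.obj q.1.1 q.1.2 q.2 ≫ (hβ q).1 := by rw [hl, Category.assoc]
        _ = FF.obj.map (arLe (Fin.zero_le p.1.2) (Fin.zero_le q.1.2) le_rfl (arpos_le2 m))
              ≫ α' q.1.2 ≫ eMap GG.obj q.1.1 q.1.2 q.2 := by rw [(hβ q).2]
        _ = (FF.obj.map (arLe (Fin.zero_le p.1.2) (Fin.zero_le q.1.2) le_rfl (arpos_le2 m))
              ≫ α' q.1.2) ≫ eMap GG.obj q.1.1 q.1.2 q.2 := by rw [Category.assoc]
        _ = (α' p.1.2 ≫ GG.obj.map (arLe (Fin.zero_le p.1.2) (Fin.zero_le q.1.2) le_rfl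
              (arpos_le2 m))) ≫ eMap GG.obj q.1.1 q.1.2 q.2 := by
            rw [hα' p.1.2 q.1.2 (arpos_le2 m)]
        _ = α' p.1.2 ≫ GG.obj.map (arLe (Fin.zero_le p.1.2) (Fin.zero_le q.1.2) le_rfl
              (arpos_le2 m)) ≫ eMap GG.obj q.1.1 q.1.2 q.2 := by rw [Category.assoc]
        _ = α' p.1.2 ≫ eMap GG.obj p.1.1 p.1.2 p.2 ≫ GG.obj.map m := by rw [← hr]
        _ = (α' p.1.2 ≫ eMap GG.obj p.1.1 p.1.2 p.2) ≫ GG.obj.map m := by rw [Category.assoc]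
        _ = (eMap FF.obj p.1.1 p.1.2 p.2 ≫ (hβ p).1) ≫ GG.obj.map m := by rw [(hβ p).2]
        _ = eMap FF.obj p.1.1 p.1.2 p.2 ≫ (hβ p).1 ≫ GG.obj.map m := by rw [Category.assoc]
    · apply NatTrans.ext
      funext t
      show (hβ ((topMono n) t)).1 = α.app t
      have h : eMap FF.obj 0 ((topMono n) t).1.2 (Fin.zero_le _) ≫ (hβ ((topMono n) t)).1
          = α' ((topMono n) t).1.2 ≫ eMap GG.obj 0 ((topMono n) t).1.2 (Fin.zero_le _) :=
        (hβ ((topMono n) t)).2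
      have e1 : eMap FF.obj 0 ((topMono n) t).1.2 (Fin.zero_le _) = 𝟙 _ := fmap_self FF.obj _
      have e2 : eMap GG.obj 0 ((topMono n) t).1.2 (Fin.zero_le _) = 𝟙 _ := fmap_self GG.obj _
      simp only [e1, e2, Category.id_comp, Category.comp_id] at h
      exact (Category.id_comp _).symm.trans h
  have hMonoTop : ∀ (FF : W A n) (s t : Fin n) (h : s.succ ≤ t.succ),
      Mono (FF.obj.map (arLe (Fin.zero_le s.succ) (Fin.zero_le t.succ) le_rfl h)) := by
    intro FF s t h
    have pb := (FF.2.2 0 s.succ s.succ t.succ (Fin.zero_le s.succ) le_rfl h).1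
    have hg : Mono (FF.obj.map (arLe (le_rfl : s.succ ≤ s.succ) h le_rfl h)) :=
      ⟨fun u v _ => (FF.2.1 s.succ).eq_of_tgt u v⟩
    exact mono_fst_of_isPullback' pb hg
  refine ⟨hfull, ?_, ?_⟩
  · constructor
    intro FF GG φ ψ h
    have happ0 : ∀ j : Fin (n+1),
        NatTrans.app φ.hom ⟨((0 : Fin (n+1)), j), Fin.zero_le j⟩
          = NatTrans.app ψ.hom ⟨((0 : Fin (n+1)), j), Fin.zero_le j⟩ := by
      intro j
      induction j using Fin.cases with
      | zero => exact (FF.2.1 0).eq_of_src _ _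
      | succ t => exact congrArg (fun τ => NatTrans.app τ t) h
    apply InducedCategory.hom_ext
    apply NatTrans.ext
    funext p
    haveI := epi_eMap FF.2 p.1.1 p.1.2 p.2
    apply (cancel_epi (eMap FF.obj p.1.1 p.1.2 p.2)).1
    have hφ := φ.hom.naturality (arLe (Fin.zero_le p.1.2) p.2 (Fin.zero_le p.1.1) le_rfl)
    have hψ := ψ.hom.naturality (arLe (Fin.zero_le p.1.2) p.2 (Fin.zero_le p.1.1) le_rfl)
    calc eMap FF.obj p.1.1 p.1.2 p.2 ≫ NatTrans.app φ.hom p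
        = NatTrans.app φ.hom ⟨((0 : Fin (n+1)), p.1.2), Fin.zero_le p.1.2⟩
            ≫ eMap GG.obj p.1.1 p.1.2 p.2 := by rw [← hφ]
      _ = NatTrans.app ψ.hom ⟨((0 : Fin (n+1)), p.1.2), Fin.zero_le p.1.2⟩
            ≫ eMap GG.obj p.1.1 p.1.2 p.2 := by rw [happ0]
      _ = eMap FF.obj p.1.1 p.1.2 p.2 ≫ NatTrans.app ψ.hom p := by rw [hψ]
  · intro D
    constructor
    · rintro ⟨FF, ⟨ε⟩⟩
      intro s t f
      have hst : s ≤ t := leOfHom f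
      have h : s.succ ≤ t.succ := Fin.succ_le_succ_iff.mpr hst
      haveI hm : Mono (FF.obj.map (arLe (Fin.zero_le s.succ) (Fin.zero_le t.succ) le_rfl h)) :=
        hMonoTop FF s t h
      have hnat := ε.hom.naturality f
      have hD : D.map f = ε.inv.app s ≫ ((topRow A n).obj FF).map f ≫ ε.hom.app t := by
        rw [hnat, ← Category.assoc, Iso.inv_hom_id_app, Category.id_comp]
      have e1 : ((topRow A n).obj FF).map f
          = FF.obj.map (arLe (Fin.zero_le s.succ) (Fin.zero_le t.succ) le_rfl h) :=
        congrArg FF.obj.map (Subsingleton.elim _ _)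
      rw [hD, e1]
      haveI : IsIso (ε.inv.app s) := inferInstance
      haveI hε : Mono (ε.hom.app t) := inferInstance
      haveI : Mono (FF.obj.map (arLe (Fin.zero_le s.succ) (Fin.zero_le t.succ) le_rfl h)
          ≫ ε.hom.app t) := @mono_comp _ _ _ _ _ _ hm _ hε
      exact @mono_comp _ _ _ _ _ _ (inferInstance : Mono (ε.inv.app s)) _ this
    · intro hD
      refine ⟨⟨FW D, wcond_FW D hD⟩, ⟨?_⟩⟩
      have hiso : ∀ t : Fin n, IsIso (cokernel.π (mp D 0 ((topMono n) t).1.2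
          ((topMono n) t).2)) := fun t => isIso_pi_zero D _ _
      haveI := hiso
      refine NatIso.ofComponents (fun t => (asIso (cokernel.π (mp D 0 ((topMono n) t).1.2
        ((topMono n) t).2))).symm) ?_
      intro s t f
      haveI := hiso s
      haveI := hiso t
      apply (cancel_epi (cokernel.π (mp D 0 ((topMono n) s).1.2 ((topMono n) s).2))).1
      have hpi : cokernel.π (mp D 0 ((topMono n) s).1.2 ((topMono n) s).2)
          ≫ ((topRow A n).obj ⟨FW D, wcond_FW D hD⟩).map f
          = mp D ((topMono n) s).1.2 ((topMono n) t).1.2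
              (arpos_le2 ((topMono n).monotone.functor.map f))
            ≫ cokernel.π (mp D 0 ((topMono n) t).1.2 ((topMono n) t).2) :=
        pi_FW (p := (topMono n) s) (q := (topMono n) t) D ((topMono n).monotone.functor.map f)
      have hmp : mp D ((topMono n) s).1.2 ((topMono n) t).1.2
          (arpos_le2 ((topMono n).monotone.functor.map f)) = D.map f := by
        show mp D s.succ t.succ _ = D.map f
        refine (mp_succ D s t _).trans ?_
        exact congrArg D.map (Subsingleton.elim _ _)
      calc cokernel.π (mp D 0 ((topMono n) s).1.2 ((topMono n) s).2)
            ≫ ((topRow A n).obj ⟨FW D, wcond_FW D hD⟩).map f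
            ≫ ((asIso (cokernel.π (mp D 0 ((topMono n) t).1.2 ((topMono n) t).2))).symm).hom
          = (mp D ((topMono n) s).1.2 ((topMono n) t).1.2
              (arpos_le2 ((topMono n).monotone.functor.map f))
              ≫ cokernel.π (mp D 0 ((topMono n) t).1.2 ((topMono n) t).2))
              ≫ ((asIso (cokernel.π (mp D 0 ((topMono n) t).1.2
                ((topMono n) t).2))).symm).hom := by
            exact (Category.assoc _ _ _).symm.trans (congrArg (fun x => x ≫
              ((asIso (cokernel.π (mp D 0 ((topMono n) t).1.2 ((topMono n) t).2))).symm).hom) hpi)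
        _ = (show Ob D ((topMono n) s).1.2 ⟶ Ob D ((topMono n) t).1.2 from D.map f) := by
            rw [Category.assoc]
            simp only [Iso.symm_hom, asIso_inv, IsIso.hom_inv_id]
            exact (Category.comp_id _).trans hmp
        _ = (show Ob D ((topMono n) s).1.2 ⟶ Ob D ((topMono n) t).1.2 from
            cokernel.π (mp D 0 ((topMono n) s).1.2 ((topMono n) s).2)
            ≫ ((asIso (cokernel.π (mp D 0 ((topMono n) s).1.2
              ((topMono n) s).2))).symm).hom ≫ D.map f) := by
            exact (IsIso.hom_inv_id_assoc (cokernel.π (mp D 0 ((topMono n) s).1.2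
              ((topMono n) s).2)) (D.map f)).symm

end Main
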